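/- Let (p₁, …, p_l) and (q₁, …, q_l) be tuples of pairwise coprime integers with 1 < p₁ < … < p_l, 1 < q₁ < … < q_l and l ≥ 3. If pᵢ ≥ qᵢ for all i = 1, …, l, then κ(p₁, …, p_l) ≥ κ(q₁, …, q_l). -/

import Mathlib

private def gauS (s : ℕ) : ℕ := ∑ t ∈ Finset.range s, t

private def NN (l : ℕ) (p : Fin l → ℕ) (c : ∀ i, Fin (p i)) : ℕ :=
  ∑ i, (∏ j ∈ Finset.univ.erase i, p j) * (c i : ℕ)

private lemma ceil_natCast_div (a d : ℕ) : ⌈((a : ℚ)) / (d : ℚ)⌉ = -((-(a : ℤ)) / (d : ℤ)) := by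
  have h : ⌊((-(a : ℤ) : ℤ) : ℚ) / (d : ℚ)⌋ = (-(a : ℤ)) / (d : ℤ) :=
    Rat.floor_intCast_div_natCast _ _
  have h2 : ((-(a : ℤ) : ℤ) : ℚ) / (d : ℚ) = -((a : ℚ) / (d : ℚ)) := by push_cast; ring
  rw [h2, Int.floor_neg] at h
  omega

private lemma sum_min_eq (L s : ℕ) (hs : s ≤ L) :
    ∑ t ∈ Finset.range L, -(min 0 (1 + (t : ℤ) - (s : ℤ))) = (gauS s : ℤ) := by
  have h1 : ∑ t ∈ Finset.range L, -(min 0 (1 + (t : ℤ) - (s : ℤ)))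
      = ∑ t ∈ Finset.range s, -(min 0 (1 + (t : ℤ) - (s : ℤ))) := by
    refine (Finset.sum_subset (Finset.range_subset_range.mpr hs) ?_).symm
    intro t _ ht
    simp only [Finset.mem_range, not_lt] at ht
    rw [min_eq_left (by omega : (0:ℤ) ≤ 1 + (t : ℤ) - (s : ℤ))]
    ring
  rw [h1]
  have h2 : ∀ t ∈ Finset.range s, -(min 0 (1 + (t : ℤ) - (s : ℤ))) = ((s - 1 - t : ℕ) : ℤ) := by
    intro t ht
    simp only [Finset.mem_range] at ht
    rw [min_eq_right (by omega : 1 + (t : ℤ) - (s : ℤ) ≤ 0)]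
    omega
  rw [Finset.sum_congr rfl h2]
  rw [Finset.sum_range_reflect (fun j => ((j : ℕ) : ℤ)) s]
  simp [gauS]

private lemma kappa_eq (l : ℕ) (p : Fin l → ℕ) (hp1 : ∀ i, 1 < p i)
    (hpcop : ∀ i j, i ≠ j → Nat.Coprime (p i) (p j))
    (e0 : ℤ) (p' : Fin l → ℕ)
    (heqp : e0 * ∏ i, (p i : ℤ)
      + ∑ i, (∏ j ∈ Finset.univ.erase i, (p j : ℤ)) * (p' i : ℤ) = -1)
    (Δ : ℕ → ℤ)
    (hΔ : ∀ n : ℕ, Δ n = 1 + |e0| * n - ∑ i, ⌈(n * p' i : ℚ) / p i⌉) :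
    |∑ᶠ n : ℕ, min 0 (Δ n)| =
      ((∑ c : (∀ i, Fin (p i)), gauS (NN l p c / ∏ i, p i) : ℕ) : ℤ) := by
  classical
  have hp0 : ∀ i, 0 < p i := fun i => lt_trans one_pos (hp1 i)
  set Pn : ℕ := ∏ i, p i with hPn
  set Qn : Fin l → ℕ := fun i => ∏ j ∈ Finset.univ.erase i, p j with hQn
  have hPpos : 0 < Pn := Finset.prod_pos (fun i _ => hp0 i)
  have hQP : ∀ i, Qn i * p i = Pn := fun i =>
    Finset.prod_erase_mul Finset.univ p (Finset.mem_univ i)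
  have heqp' : e0 * (Pn : ℤ) + ∑ i, (Qn i : ℤ) * (p' i : ℤ) = -1 := by
    rw [hPn, hQn]
    push_cast
    exact heqp
  -- p i divides Pn, and Qn j for j ≠ i
  have hpP : ∀ i, (p i : ℤ) ∣ (Pn : ℤ) := fun i =>
    Int.natCast_dvd_natCast.mpr (Finset.dvd_prod_of_mem p (Finset.mem_univ i))
  have hpQ : ∀ i j, i ≠ j → (p i : ℤ) ∣ (Qn j : ℤ) := by
    intro i j hij
    refine Int.natCast_dvd_natCast.mpr (Finset.dvd_prod_of_mem p ?_)
    simp [Finset.mem_erase, hij]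
  -- key congruence : p i ∣ Qn i * p' i + 1
  have hkey : ∀ i, (p i : ℤ) ∣ ((Qn i : ℤ) * (p' i : ℤ) + 1) := by
    intro i
    have hsplit := Finset.add_sum_erase Finset.univ
      (fun j => (Qn j : ℤ) * (p' j : ℤ)) (Finset.mem_univ i)
    have h3 : ((Qn i : ℤ) * (p' i : ℤ) + 1)
        = -(e0 * (Pn : ℤ)) - ∑ j ∈ Finset.univ.erase i, (Qn j : ℤ) * (p' j : ℤ) := by
      linarith [heqp', hsplit]
    rw [h3]
    refine dvd_sub (dvd_neg.mpr ((hpP i).mul_left e0)) (Finset.dvd_sum ?_)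
    intro j hj
    have hij : i ≠ j := by
      intro h; rw [h] at hj; exact (Finset.notMem_erase j _) hj
    exact (hpQ i j hij).mul_right _
  -- e0 is negative
  have he0 : e0 < 0 := by
    have hS : 0 ≤ ∑ i, (Qn i : ℤ) * (p' i : ℤ) :=
      Finset.sum_nonneg (fun i _ => by positivity)
    have hPz : (0 : ℤ) < (Pn : ℤ) := by exact_mod_cast hPpos
    nlinarith
  -- residues
  set r : ℕ → Fin l → ℤ := fun n i => (-((n * p' i : ℕ) : ℤ)) % (p i : ℤ) with hrdef
  have hpz : ∀ i, ((p i : ℤ)) ≠ 0 := fun i => by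
    have := hp0 i; positivity
  have hpzlt : ∀ i, (0:ℤ) < (p i : ℤ) := fun i => by exact_mod_cast hp0 i
  have hr0 : ∀ n i, 0 ≤ r n i := fun n i => Int.emod_nonneg _ (hpz i)
  have hrlt : ∀ n i, r n i < (p i : ℤ) := fun n i => Int.emod_lt_of_pos _ (hpzlt i)
  have hrcong : ∀ n i, (p i : ℤ) ∣ (r n i - (-((n * p' i : ℕ) : ℤ))) := by
    intro n i
    rw [hrdef]
    simp only []
    rw [Int.emod_def]
    exact ⟨-((-((n * p' i : ℕ) : ℤ)) / (p i : ℤ)), by ring⟩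
  -- the fundamental identity  Pn * Δ n = Pn + n - ∑ Qn i * r n i
  have hΔP : ∀ n : ℕ, (Pn : ℤ) * Δ n = (Pn : ℤ) + n - ∑ i, (Qn i : ℤ) * r n i := by
    intro n
    have hceil : ∀ i, ⌈((n : ℚ)) * ((p' i : ℚ)) / ((p i : ℚ))⌉
        = -((-((n * p' i : ℕ) : ℤ)) / (p i : ℤ)) := by
      intro i
      rw [show ((n : ℚ)) * ((p' i : ℚ)) = (((n * p' i : ℕ)) : ℚ) by push_cast; ring]
      exact ceil_natCast_div _ _
    have hsum : ∑ i, ⌈((n : ℚ)) * ((p' i : ℚ)) / ((p i : ℚ))⌉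
        = -∑ i, ((-((n * p' i : ℕ) : ℤ)) / (p i : ℤ)) := by
      rw [← Finset.sum_neg_distrib]
      exact Finset.sum_congr rfl (fun i _ => hceil i)
    have h1 : ∀ i, (Pn : ℤ) * ((-((n * p' i : ℕ) : ℤ)) / (p i : ℤ))
        = -((n : ℤ) * ((Qn i : ℤ) * (p' i : ℤ))) - (Qn i : ℤ) * r n i := by
      intro i
      have h2 := Int.mul_ediv_add_emod (-((n * p' i : ℕ) : ℤ)) (p i : ℤ)
      have h3 : ((Pn : ℕ) : ℤ) = (Qn i : ℤ) * (p i : ℤ) := by exact_mod_cast (hQP i).symm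
      have h4 : (p i : ℤ) * ((-((n * p' i : ℕ) : ℤ)) / (p i : ℤ))
          = (-((n * p' i : ℕ) : ℤ)) - r n i := by
        rw [hrdef]; simp only []; linarith [h2]
      calc (Pn : ℤ) * ((-((n * p' i : ℕ) : ℤ)) / (p i : ℤ))
          = (Qn i : ℤ) * ((p i : ℤ) * ((-((n * p' i : ℕ) : ℤ)) / (p i : ℤ))) := by
            rw [h3]; ring
        _ = (Qn i : ℤ) * ((-((n * p' i : ℕ) : ℤ)) - r n i) := by rw [h4]
        _ = -((n : ℤ) * ((Qn i : ℤ) * (p' i : ℤ))) - (Qn i : ℤ) * r n i := by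
            push_cast; ring
    have hS : ∑ i, (Pn : ℤ) * ((-((n * p' i : ℕ) : ℤ)) / (p i : ℤ))
        = -((n : ℤ) * ∑ i, (Qn i : ℤ) * (p' i : ℤ)) - ∑ i, (Qn i : ℤ) * r n i := by
      rw [Finset.sum_congr rfl (fun i _ => h1 i), Finset.sum_sub_distrib,
        Finset.sum_neg_distrib, ← Finset.mul_sum]
    rw [hΔ n, abs_of_neg he0, hsum]
    rw [show (Pn : ℤ) * (1 + -e0 * (n : ℤ) - -∑ i, ((-((n * p' i : ℕ) : ℤ)) / (p i : ℤ)))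
        = (Pn : ℤ) + -e0 * (n : ℤ) * (Pn : ℤ)
          + ∑ i, (Pn : ℤ) * ((-((n * p' i : ℕ) : ℤ)) / (p i : ℤ)) from by
      rw [← Finset.mul_sum]; ring]
    rw [hS]
    linear_combination (-(n : ℤ)) * heqp'
  -- residue vectors
  set cvec : ℕ → ∀ i, Fin (p i) := fun n i => ⟨(r n i).toNat, by
    have h1 := hr0 n i; have h2 := hrlt n i
    have h3 : ((p i : ℕ) : ℤ) = (p i : ℤ) := rfl
    omega⟩ with hcvec
  have hcvec_val : ∀ n i, ((cvec n i : ℕ) : ℤ) = r n i := by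
    intro n i
    rw [hcvec]
    simp only []
    exact Int.toNat_of_nonneg (hr0 n i)
  have hNcast : ∀ c : (∀ i, Fin (p i)),
      ((NN l p c : ℕ) : ℤ) = ∑ i, (Qn i : ℤ) * ((c i : ℕ) : ℤ) := by
    intro c
    rw [NN]
    simp only [hQn]
    push_cast
    rfl
  have hNr : ∀ n, ((NN l p (cvec n) : ℕ) : ℤ) = ∑ i, (Qn i : ℤ) * r n i := by
    intro n
    rw [hNcast]
    exact Finset.sum_congr rfl (fun i _ => by rw [hcvec_val n i])
  -- p i ∣ Qn i * r n i - n
  have hdvd_rn : ∀ (n : ℕ) i, (p i : ℤ) ∣ ((Qn i : ℤ) * r n i - (n : ℤ)) := by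
    intro n i
    obtain ⟨k, hk⟩ := hrcong n i
    obtain ⟨m, hm⟩ := hkey i
    refine ⟨-(n : ℤ) * m + (Qn i : ℤ) * k, ?_⟩
    have h5 : r n i = -((n * p' i : ℕ) : ℤ) + (p i : ℤ) * k := by linarith
    rw [h5]
    push_cast at hm ⊢
    linear_combination (-(n : ℤ)) * hm
  -- Pn ∣ NN (cvec n) - n
  have hPZ : ((Pn : ℕ) : ℤ) = ∏ i, (p i : ℤ) := by rw [hPn]; push_cast; rfl
  have hcopZ : ((Finset.univ : Finset (Fin l)) : Set (Fin l)).Pairwise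
      (Function.onFun IsCoprime fun i => (p i : ℤ)) := by
    intro i _ j _ hij
    rw [Function.onFun]
    rw [Int.isCoprime_iff_gcd_eq_one, Int.gcd_natCast_natCast]
    exact hpcop i j hij
  have hPdvd : ∀ n : ℕ, (Pn : ℤ) ∣ (((NN l p (cvec n) : ℕ) : ℤ) - (n : ℤ)) := by
    intro n
    rw [hPZ]
    refine Finset.prod_dvd_of_coprime hcopZ (fun i _ => ?_)
    rw [hNr n]
    have hsplit := Finset.add_sum_erase Finset.univ
      (fun j => (Qn j : ℤ) * r n j) (Finset.mem_univ i)
    have h6 : ∑ j, (Qn j : ℤ) * r n j - (n : ℤ)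
        = ((Qn i : ℤ) * r n i - (n : ℤ)) + ∑ j ∈ Finset.univ.erase i, (Qn j : ℤ) * r n j := by
      rw [← hsplit]; ring
    rw [h6]
    refine dvd_add (hdvd_rn n i) (Finset.dvd_sum ?_)
    intro j hj
    have hij : i ≠ j := by
      intro h; rw [h] at hj; exact (Finset.notMem_erase j _) hj
    exact (hpQ i j hij).mul_right _
  -- congruent inputs give the same residue vector
  have hstep : ∀ (m : ℕ) (c : ∀ i, Fin (p i)),
      (Pn : ℤ) ∣ ((m : ℤ) - ((NN l p c : ℕ) : ℤ)) → cvec m = c := by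
    intro m c hdvdP
    funext i
    have hA : (p i : ℤ) ∣ (((c i : ℕ) : ℤ) + ((NN l p c : ℕ) : ℤ) * (p' i : ℤ)) := by
      rw [hNcast]
      have hsplit := Finset.add_sum_erase Finset.univ
        (fun j => (Qn j : ℤ) * ((c j : ℕ) : ℤ)) (Finset.mem_univ i)
      have h7 : ((c i : ℕ) : ℤ) + (∑ j, (Qn j : ℤ) * ((c j : ℕ) : ℤ)) * (p' i : ℤ)
          = ((c i : ℕ) : ℤ) * ((Qn i : ℤ) * (p' i : ℤ) + 1)
            + (∑ j ∈ Finset.univ.erase i, (Qn j : ℤ) * ((c j : ℕ) : ℤ)) * (p' i : ℤ) := by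
        rw [← hsplit]; ring
      rw [h7]
      refine dvd_add ((hkey i).mul_left _) (Dvd.dvd.mul_right (Finset.dvd_sum ?_) _)
      intro j hj
      have hij : i ≠ j := by
        intro h; rw [h] at hj; exact (Finset.notMem_erase j _) hj
      exact (hpQ i j hij).mul_right _
    have hB : (p i : ℤ) ∣ (((c i : ℕ) : ℤ) - (-((m * p' i : ℕ) : ℤ))) := by
      have h8 : (p i : ℤ) ∣ ((m : ℤ) - ((NN l p c : ℕ) : ℤ)) * (p' i : ℤ) :=
        Dvd.dvd.mul_right (dvd_trans (hpP i) hdvdP) _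
      have h9 := dvd_add hA h8
      have h10 : ((c i : ℕ) : ℤ) + ((NN l p c : ℕ) : ℤ) * (p' i : ℤ)
          + ((m : ℤ) - ((NN l p c : ℕ) : ℤ)) * (p' i : ℤ)
          = ((c i : ℕ) : ℤ) - (-((m * p' i : ℕ) : ℤ)) := by push_cast; ring
      rwa [h10] at h9
    have H : (-((m * p' i : ℕ) : ℤ)) % (p i : ℤ) = ((c i : ℕ) : ℤ) % (p i : ℤ) :=
      Int.modEq_iff_dvd.mpr hB
    have h11 : r m i = ((c i : ℕ) : ℤ) := by
      rw [hrdef]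
      simp only []
      rw [H, Int.emod_eq_of_lt (by positivity) (by exact_mod_cast (c i).isLt)]
    apply Fin.ext
    have := hcvec_val m i
    omega
  -- mod equality
  have hmod : ∀ n : ℕ, NN l p (cvec n) % Pn = n % Pn := by
    intro n
    have h1 : ((NN l p (cvec n) % Pn : ℕ) : ℤ) = ((n % Pn : ℕ) : ℤ) := by
      rw [Int.natCast_mod, Int.natCast_mod]
      exact (Int.modEq_iff_dvd.mpr (hPdvd n)).symm
    exact_mod_cast h1
  -- Δ in terms of quotients
  have hD : ∀ n : ℕ, Δ n = 1 + ((n / Pn : ℕ) : ℤ) - ((NN l p (cvec n) / Pn : ℕ) : ℤ) := by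
    intro n
    have h1 := hΔP n
    rw [← hNr n] at h1
    have hdm1 := Nat.div_add_mod (NN l p (cvec n)) Pn
    have hdm2 := Nat.div_add_mod n Pn
    have hPz : (0 : ℤ) < (Pn : ℤ) := by exact_mod_cast hPpos
    have c1 : ((NN l p (cvec n) : ℕ) : ℤ)
        = (Pn : ℤ) * ((NN l p (cvec n) / Pn : ℕ) : ℤ) + ((n % Pn : ℕ) : ℤ) := by
      rw [← hmod n]; exact_mod_cast hdm1.symm
    have c2 : ((n : ℕ) : ℤ) = (Pn : ℤ) * ((n / Pn : ℕ) : ℤ) + ((n % Pn : ℕ) : ℤ) := by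
      exact_mod_cast hdm2.symm
    have h3 : (Pn : ℤ) * Δ n
        = (Pn : ℤ) * (1 + ((n / Pn : ℕ) : ℤ) - ((NN l p (cvec n) / Pn : ℕ) : ℤ)) := by
      rw [h1]
      linear_combination c2 - c1
    exact mul_left_cancel₀ (ne_of_gt hPz) h3
  -- bound on NN
  have hNNle : ∀ c : (∀ i, Fin (p i)), NN l p c ≤ l * Pn := by
    intro c
    rw [NN]
    calc ∑ i, Qn i * (c i : ℕ) ≤ ∑ _i : Fin l, Pn := by
          refine Finset.sum_le_sum (fun i _ => ?_)
          calc Qn i * (c i : ℕ) ≤ Qn i * p i := Nat.mul_le_mul_left _ (le_of_lt (c i).isLt)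
            _ = Pn := hQP i
      _ = l * Pn := by simp [Finset.sum_const, Finset.card_univ, Nat.smul_one_eq_cast]
  have hsle : ∀ c : (∀ i, Fin (p i)), NN l p c / Pn ≤ l := by
    intro c
    have := Nat.div_le_div_right (c := Pn) (hNNle c)
    rwa [Nat.mul_div_cancel _ hPpos] at this
  -- Δ n ≥ 0 for n ≥ l * Pn
  have hbound : ∀ n : ℕ, l * Pn ≤ n → 0 ≤ Δ n := by
    intro n hn
    rw [hD n]
    have h1 : NN l p (cvec n) / Pn ≤ l := hsle _
    have h2 : l ≤ n / Pn := by
      rw [Nat.le_div_iff_mul_le hPpos]; omega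
    have h3 : ((NN l p (cvec n) / Pn : ℕ) : ℤ) ≤ (l : ℤ) := by exact_mod_cast h1
    have h4 : ((l : ℕ) : ℤ) ≤ ((n / Pn : ℕ) : ℤ) := by exact_mod_cast h2
    linarith
  -- reduce the finsum to a finite range
  have hsupp : (Function.support fun n => min 0 (Δ n)) ⊆ ↑(Finset.range (l * Pn)) := by
    intro n hn
    simp only [Function.mem_support] at hn
    simp only [Finset.coe_range, Set.mem_Iio]
    by_contra h
    push_neg at h
    exact hn (min_eq_left (hbound n h))
  rw [finsum_eq_sum_of_support_subset _ hsupp]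
  have hnonpos : ∑ n ∈ Finset.range (l * Pn), min 0 (Δ n) ≤ 0 :=
    Finset.sum_nonpos (fun n _ => min_le_left _ _)
  rw [abs_of_nonpos hnonpos, ← Finset.sum_neg_distrib]
  -- the bijection
  have hbij : ∑ n ∈ Finset.range (l * Pn), -(min 0 (Δ n))
      = ∑ x ∈ (Finset.univ : Finset (∀ i, Fin (p i))) ×ˢ Finset.range l,
          -(min 0 (1 + (x.2 : ℤ) - ((NN l p x.1 / Pn : ℕ) : ℤ))) := by
    refine Finset.sum_nbij' (fun n => (cvec n, n / Pn))
      (fun x => NN l p x.1 % Pn + x.2 * Pn) ?_ ?_ ?_ ?_ ?_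
    · intro n hn
      simp only [Finset.mem_range] at hn
      simp only [Finset.mem_product, Finset.mem_univ, Finset.mem_range, true_and]
      exact Nat.div_lt_of_lt_mul (Nat.mul_comm l Pn ▸ hn)
    · intro x hx
      simp only [Finset.mem_product, Finset.mem_univ, Finset.mem_range, true_and] at hx
      simp only [Finset.mem_range]
      have h1 : NN l p x.1 % Pn < Pn := Nat.mod_lt _ hPpos
      have h2 : x.2 + 1 ≤ l := hx
      calc NN l p x.1 % Pn + x.2 * Pn < Pn + x.2 * Pn := by omega
        _ = (x.2 + 1) * Pn := by ring
        _ ≤ l * Pn := Nat.mul_le_mul_right _ h2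
    · intro n _
      simp only []
      rw [hmod n, Nat.mod_add_div']
    · intro x hx
      simp only [Finset.mem_product, Finset.mem_univ, Finset.mem_range, true_and] at hx
      have hdm := Nat.div_add_mod (NN l p x.1) Pn
      have hc : cvec (NN l p x.1 % Pn + x.2 * Pn) = x.1 := by
        refine hstep _ _ ?_
        refine ⟨(x.2 : ℤ) - ((NN l p x.1 / Pn : ℕ) : ℤ), ?_⟩
        have hdmz : (Pn : ℤ) * ((NN l p x.1 / Pn : ℕ) : ℤ) + ((NN l p x.1 % Pn : ℕ) : ℤ)
            = ((NN l p x.1 : ℕ) : ℤ) := by exact_mod_cast hdm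
        push_cast
        push_cast at hdmz
        linarith
      have hq : (NN l p x.1 % Pn + x.2 * Pn) / Pn = x.2 := by
        rw [Nat.add_mul_div_right _ _ hPpos,
          Nat.div_eq_of_lt (Nat.mod_lt _ hPpos), Nat.zero_add]
      rw [Prod.ext_iff]
      exact ⟨hc, hq⟩
    · intro n _
      simp only []
      rw [hD n]
  rw [hbij, Finset.sum_product]
  rw [Nat.cast_sum]
  refine Finset.sum_congr rfl (fun c _ => ?_)
  exact sum_min_eq l (NN l p c / Pn) (hsle c)

private lemma gauS_mono : Monotone gauS := fun _ _ h =>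
  Finset.sum_le_sum_of_subset (Finset.range_subset_range.2 h)

private lemma grid_le (l : ℕ) (p q : Fin l → ℕ) (hq0 : ∀ i, 0 < q i)
    (hge : ∀ i, q i ≤ p i) :
    ∑ c : (∀ i, Fin (q i)), gauS (NN l q c / ∏ i, q i)
      ≤ ∑ c : (∀ i, Fin (p i)), gauS (NN l p c / ∏ i, p i) := by
  classical
  have hp0 : ∀ i, 0 < p i := fun i => lt_of_lt_of_le (hq0 i) (hge i)
  have hPpos : 0 < ∏ i, p i := Finset.prod_pos (fun i _ => hp0 i)
  have hQpos : 0 < ∏ i, q i := Finset.prod_pos (fun i _ => hq0 i)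
  -- the injection
  have hltP : ∀ (i : Fin l) (c : Fin (q i)), ((c : ℕ) * p i + (q i - 1)) / q i < p i := by
    intro i c
    rw [Nat.div_lt_iff_lt_mul (hq0 i)]
    have e1 : (q i - 1) * p i + p i = q i * p i := by
      have h : (q i - 1 + 1) = q i := Nat.succ_pred_eq_of_pos (hq0 i)
      calc (q i - 1) * p i + p i = (q i - 1 + 1) * p i := by ring
        _ = q i * p i := by rw [h]
    calc (c : ℕ) * p i + (q i - 1)
        ≤ (q i - 1) * p i + (q i - 1) :=
          Nat.add_le_add_right (Nat.mul_le_mul_right _ (by omega)) _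
      _ < (q i - 1) * p i + p i :=
          Nat.add_lt_add_left (by have := hge i; have := hq0 i; omega) _
      _ = q i * p i := e1
      _ = p i * q i := Nat.mul_comm _ _
  set ι : (∀ i, Fin (q i)) → (∀ i, Fin (p i)) :=
    fun c i => ⟨((c i : ℕ) * p i + (q i - 1)) / q i, hltP i (c i)⟩ with hι
  have hmono : ∀ (i : Fin l) (a b : ℕ), a < b →
      (a * p i + (q i - 1)) / q i < (b * p i + (q i - 1)) / q i := by
    intro i a b hab
    have h1 : a * p i + (q i - 1) + q i ≤ b * p i + (q i - 1) := by
      calc a * p i + (q i - 1) + q i = a * p i + q i + (q i - 1) := by ring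
        _ ≤ a * p i + p i + (q i - 1) := Nat.add_le_add_right (Nat.add_le_add_left (hge i) _) _
        _ = (a + 1) * p i + (q i - 1) := by ring
        _ ≤ b * p i + (q i - 1) := Nat.add_le_add_right (Nat.mul_le_mul_right _ hab) _
    have h2 := Nat.div_le_div_right (c := q i) h1
    rw [Nat.add_div_right _ (hq0 i)] at h2
    omega
  have hinj : Function.Injective ι := by
    intro c c' h
    funext i
    have h2 : ((ι c) i : ℕ) = ((ι c') i : ℕ) := by rw [h]
    rcases lt_trichotomy ((c i : ℕ)) ((c' i : ℕ)) with hlt | heq | hgt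
    · exact absurd h2 (Nat.ne_of_lt (hmono i _ _ hlt))
    · exact Fin.ext heq
    · exact absurd h2.symm (Nat.ne_of_lt (hmono i _ _ hgt))
  have hceil : ∀ (i : Fin l) (c : Fin (q i)),
      (c : ℕ) * p i ≤ (((c : ℕ) * p i + (q i - 1)) / q i) * q i := by
    intro i c
    have hdm := Nat.div_add_mod ((c : ℕ) * p i + (q i - 1)) (q i)
    have hm := Nat.mod_lt ((c : ℕ) * p i + (q i - 1)) (hq0 i)
    zify [hq0 i] at hdm hm ⊢
    linarith
  have hkeyineq : ∀ c, NN l q c * (∏ i, p i) ≤ NN l p (ι c) * (∏ i, q i) := by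
    intro c
    rw [NN, NN, Finset.sum_mul, Finset.sum_mul]
    refine Finset.sum_le_sum ?_
    intro i _
    have e1 : (∏ j ∈ Finset.univ.erase i, q j) * (c i : ℕ) * (∏ j, p j)
        = ((∏ j ∈ Finset.univ.erase i, q j) * (∏ j ∈ Finset.univ.erase i, p j))
          * ((c i : ℕ) * p i) := by
      rw [← Finset.prod_erase_mul Finset.univ p (Finset.mem_univ i)]; ring
    have e2 : (∏ j ∈ Finset.univ.erase i, p j) * ((ι c i : ℕ)) * (∏ j, q j)
        = ((∏ j ∈ Finset.univ.erase i, q j) * (∏ j ∈ Finset.univ.erase i, p j))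
          * (((ι c i : ℕ)) * q i) := by
      rw [← Finset.prod_erase_mul Finset.univ q (Finset.mem_univ i)]; ring
    rw [e1, e2]
    exact Nat.mul_le_mul_left _ (hceil i (c i))
  have hdivle : ∀ c, NN l q c / (∏ i, q i) ≤ NN l p (ι c) / (∏ i, p i) := by
    intro c
    rw [Nat.le_div_iff_mul_le hPpos]
    have h1 : (NN l q c / ∏ i, q i) * (∏ i, q i) ≤ NN l q c := Nat.div_mul_le_self _ _
    have h2 : (NN l q c / ∏ i, q i) * (∏ i, p i) * (∏ i, q i) ≤ NN l p (ι c) * (∏ i, q i) := by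
      calc (NN l q c / ∏ i, q i) * (∏ i, p i) * (∏ i, q i)
          = (NN l q c / ∏ i, q i) * (∏ i, q i) * (∏ i, p i) := by ring
        _ ≤ NN l q c * (∏ i, p i) := Nat.mul_le_mul_right _ h1
        _ ≤ _ := hkeyineq c
    exact Nat.le_of_mul_le_mul_right h2 hQpos
  calc ∑ c : (∀ i, Fin (q i)), gauS (NN l q c / ∏ i, q i)
      ≤ ∑ c : (∀ i, Fin (q i)), gauS (NN l p (ι c) / ∏ i, p i) :=
        Finset.sum_le_sum (fun c _ => gauS_mono (hdivle c))
    _ = ∑ c ∈ Finset.univ.image ι, gauS (NN l p c / ∏ i, p i) :=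
        by rw [Finset.sum_image (fun a _ b _ h => hinj h)]
    _ ≤ ∑ c : (∀ i, Fin (p i)), gauS (NN l p c / ∏ i, p i) :=
        Finset.sum_le_sum_of_subset (Finset.subset_univ _)

/-- Monotonicity of `κ` under the natural partial order of `l`-tuples:
if `pᵢ ≥ qᵢ` for all `i`, then `κ(p₁,…,p_l) ≥ κ(q₁,…,q_l)`. -/
theorem stmt_14 (l : ℕ) (hl : 3 ≤ l) (p q : Fin l → ℕ)
    (hp1 : ∀ i, 1 < p i) (hpmono : StrictMono p)
    (hpcop : ∀ i j, i ≠ j → Nat.Coprime (p i) (p j))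
    (hq1 : ∀ i, 1 < q i) (hqmono : StrictMono q)
    (hqcop : ∀ i j, i ≠ j → Nat.Coprime (q i) (q j))
    (e0 : ℤ) (p' : Fin l → ℕ) (hp' : ∀ i, p' i ≤ p i - 1)
    (heqp : e0 * ∏ i, (p i : ℤ)
      + ∑ i, (∏ j ∈ Finset.univ.erase i, (p j : ℤ)) * (p' i : ℤ) = -1)
    (f0 : ℤ) (q' : Fin l → ℕ) (hq' : ∀ i, q' i ≤ q i - 1)
    (heqq : f0 * ∏ i, (q i : ℤ)
      + ∑ i, (∏ j ∈ Finset.univ.erase i, (q j : ℤ)) * (q' i : ℤ) = -1)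
    (Δp Δq : ℕ → ℤ)
    (hΔp : ∀ n : ℕ, Δp n = 1 + |e0| * n - ∑ i, ⌈(n * p' i : ℚ) / p i⌉)
    (hΔq : ∀ n : ℕ, Δq n = 1 + |f0| * n - ∑ i, ⌈(n * q' i : ℚ) / q i⌉)
    (hge : ∀ i, q i ≤ p i) :
    |∑ᶠ n : ℕ, min 0 (Δq n)| ≤ |∑ᶠ n : ℕ, min 0 (Δp n)| := by
  rw [kappa_eq l p hp1 hpcop e0 p' heqp Δp hΔp,
    kappa_eq l q hq1 hqcop f0 q' heqq Δq hΔq]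
  exact_mod_cast grid_le l p q (fun i => lt_trans one_pos (hq1 i)) hge
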